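/- Let G be a complex m×n matrix with ‖G v‖ ≥ γ₀ ‖v‖ for all v (γ₀ > 0), set A = Gᴴ G, K = A⁻¹ Gᴴ, and fix η with 0 < η < γ₀ and 2(1 − η) − η/γ₀² > 0. Then there exists a constant c₀ > 0, depending only on γ₀ and η, such that for every b ∈ ℂⁿ the function E(t) = ‖r(t)‖² + ‖s(t)‖² − 2η Re⟨r(t), K s(t)⟩ along the residual dynamics w(t) = exp(t M)(b, 0) = (r(t), s(t)) satisfies E(t) ≤ E(0) e^{−c₀ t /(1 + η/γ₀)} for all t ≥ 0; consequently ‖w(t)‖² ≤ ((1 + η/γ₀)/(1 − η/γ₀)) e^{−c₀ t /(1 + η/γ₀)} ‖b‖² for all t ≥ 0. -/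

import Mathlib

open scoped Matrix ComplexInnerProductSpace
open Filter MeasureTheory

noncomputable section

/-- `ℂ^k` with the ℓ² norm. -/
abbrev Evec (k : ℕ) : Type := EuclideanSpace ℂ (Fin k)

/-- The joint space `ℂⁿ ⊕ ℂᵐ` with the ℓ² norm. -/
abbrev Jvec (n m : ℕ) : Type := EuclideanSpace ℂ (Fin n ⊕ Fin m)

/-- A complex matrix viewed as a continuous linear map between Euclidean spaces,
so that `‖matCLM A‖` is the induced ℓ² operator norm. -/
noncomputable def matCLM {α β : Type*} [Fintype α] [Fintype β] [DecidableEq β]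
    (A : Matrix α β ℂ) : EuclideanSpace ℂ β →L[ℂ] EuclideanSpace ℂ α :=
  LinearMap.toContinuousLinearMap (Matrix.toEuclideanLin A)

/-- The block matrix `M = [[0, -Gᴴ], [G, -I]]` on `ℂⁿ ⊕ ℂᵐ`. -/
def blockM {m n : ℕ} (G : Matrix (Fin m) (Fin n) ℂ) :
    Matrix (Fin n ⊕ Fin m) (Fin n ⊕ Fin m) ℂ :=
  Matrix.fromBlocks 0 (-Gᴴ) G (-1)

/-- The matrix exponential `exp (t M)` as a continuous linear map on `ℂⁿ ⊕ ℂᵐ`. -/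
noncomputable def expM {m n : ℕ} (G : Matrix (Fin m) (Fin n) ℂ) (t : ℝ) :
    Jvec n m →L[ℂ] Jvec n m :=
  NormedSpace.exp (t • matCLM (blockM G))

/-- Join two blocks into a joint vector. -/
def joinV {n m : ℕ} (r : Evec n) (s : Evec m) : Jvec n m :=
  (WithLp.equiv 2 _).symm (Sum.elim ((WithLp.equiv 2 _) r) ((WithLp.equiv 2 _) s))

/-- First (residual `r`) block of a joint vector. -/
def rblock {n m : ℕ} (w : Jvec n m) : Evec n :=
  (WithLp.equiv 2 _).symm fun i => w (Sum.inl i)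

/-- Second (residual `s`) block of a joint vector. -/
def sblock {n m : ℕ} (w : Jvec n m) : Evec m :=
  (WithLp.equiv 2 _).symm fun j => w (Sum.inr j)

/-- Residual dynamics `w(t) = exp (t M) (b, 0)`. -/
noncomputable def wdyn {m n : ℕ} (G : Matrix (Fin m) (Fin n) ℂ) (b : Evec n) (t : ℝ) :
    Jvec n m :=
  expM G t (joinV b 0)

/-- Accumulator `x(t) = ∫₀ᵗ r(τ) dτ`. -/
noncomputable def xacc {m n : ℕ} (G : Matrix (Fin m) (Fin n) ℂ) (b : Evec n) (t : ℝ) :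
    Evec n :=
  ∫ τ in (0:ℝ)..t, rblock (wdyn G b τ)

/-! ### Auxiliary lemmas -/

lemma matCLM_apply {α β : Type*} [Fintype α] [Fintype β] [DecidableEq β] (A : Matrix α β ℂ)
    (v : EuclideanSpace ℂ β) (i : α) : matCLM A v i = A.mulVec v i := by
  simp [matCLM, Matrix.toEuclideanLin, Matrix.toLin'_apply]

lemma inner_matCLM_conjT {α β : Type*} [Fintype α] [Fintype β] [DecidableEq β] [DecidableEq α]
    (A : Matrix α β ℂ) (y : EuclideanSpace ℂ α) (x : EuclideanSpace ℂ β) :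
    ⟪matCLM Aᴴ y, x⟫ = ⟪y, matCLM A x⟫ := by
  simp only [matCLM, LinearMap.coe_toContinuousLinearMap',
    Matrix.toEuclideanLin_conjTranspose_eq_adjoint, LinearMap.adjoint_inner_left]

lemma inner_matCLM_conjT' {α β : Type*} [Fintype α] [Fintype β] [DecidableEq β] [DecidableEq α]
    (A : Matrix α β ℂ) (x : EuclideanSpace ℂ β) (y : EuclideanSpace ℂ α) :
    ⟪x, matCLM Aᴴ y⟫ = ⟪matCLM A x, y⟫ := by
  rw [← inner_conj_symm, inner_matCLM_conjT, inner_conj_symm]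

lemma matCLM_mul {α β γ : Type*} [Fintype α] [Fintype β] [Fintype γ] [DecidableEq β]
    [DecidableEq γ] (A : Matrix α β ℂ) (B : Matrix β γ ℂ) (v : EuclideanSpace ℂ γ) :
    matCLM (A * B) v = matCLM A (matCLM B v) := by
  simp [matCLM, Matrix.toEuclideanLin, Matrix.toLin'_mul]

lemma matCLM_one {α : Type*} [Fintype α] [DecidableEq α] (v : EuclideanSpace ℂ α) :
    matCLM (1 : Matrix α α ℂ) v = v := by
  simp [matCLM, Matrix.toEuclideanLin]

lemma rblock_matCLM_blockM {m n : ℕ} (G : Matrix (Fin m) (Fin n) ℂ) (w : Jvec n m) :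
    rblock (matCLM (blockM G) w) = -(matCLM Gᴴ (sblock w)) := by
  ext i
  have h1 : rblock (matCLM (blockM G) w) i = (blockM G).mulVec w (Sum.inl i) :=
    matCLM_apply _ _ _
  rw [h1]
  have h2 : (-(matCLM Gᴴ (sblock w))) i = -(Gᴴ.mulVec (sblock w) i) := by
    rw [PiLp.neg_apply, matCLM_apply]
  rw [h2]
  simp [blockM, Matrix.mulVec, dotProduct, Fintype.sum_sum_type, Matrix.fromBlocks]
  rfl

lemma sblock_matCLM_blockM {m n : ℕ} (G : Matrix (Fin m) (Fin n) ℂ) (w : Jvec n m) :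
    sblock (matCLM (blockM G) w) = matCLM G (rblock w) - sblock w := by
  ext j
  have h1 : sblock (matCLM (blockM G) w) j = (blockM G).mulVec w (Sum.inr j) :=
    matCLM_apply _ _ _
  rw [h1]
  have h2 : (matCLM G (rblock w) - sblock w) j = G.mulVec (rblock w) j - sblock w j := by
    rw [PiLp.sub_apply, matCLM_apply]
  rw [h2]
  simp [blockM, Matrix.mulVec, dotProduct, Fintype.sum_sum_type, Matrix.fromBlocks,
    Matrix.one_apply, sub_eq_add_neg]
  rfl

lemma norm_sq_split {n m : ℕ} (w : Jvec n m) :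
    ‖w‖^2 = ‖rblock w‖^2 + ‖sblock w‖^2 := by
  have h1 := @inner_self_eq_norm_sq ℂ _ _ _ _ w
  have h2 := @inner_self_eq_norm_sq ℂ _ _ _ _ (rblock w)
  have h3 := @inner_self_eq_norm_sq ℂ _ _ _ _ (sblock w)
  rw [← h1, ← h2, ← h3]
  simp only [PiLp.inner_apply, RCLike.inner_apply, Fintype.sum_sum_type, map_add, map_sum]
  rfl

section Poincare

variable {m n : ℕ} {γ₀ : ℝ} {G : Matrix (Fin m) (Fin n) ℂ}

lemma det_unit (hγ : 0 < γ₀) (hG : ∀ v : Evec n, γ₀ * ‖v‖ ≤ ‖matCLM G v‖) :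
    IsUnit (Gᴴ * G).det := by
  by_contra h
  have hdet : (Gᴴ * G).det = 0 := by rwa [isUnit_iff_ne_zero, not_not] at h
  obtain ⟨v, hv0, hv⟩ := (Matrix.exists_mulVec_eq_zero_iff).2 hdet
  set ve : Evec n := (WithLp.equiv 2 _).symm v with hve
  have hAve : matCLM (Gᴴ * G) ve = 0 := by
    ext i
    rw [matCLM_apply]
    show (Gᴴ * G).mulVec v i = _
    rw [hv]; rfl
  have hGv : ‖matCLM G ve‖^2 = 0 := by
    have h1 := @inner_self_eq_norm_sq ℂ _ _ _ _ (matCLM G ve)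
    rw [← h1]
    have h2 : ⟪matCLM G ve, matCLM G ve⟫ = ⟪ve, matCLM (Gᴴ * G) ve⟫ := by
      rw [matCLM_mul, inner_matCLM_conjT' G ve (matCLM G ve)]
    rw [h2, hAve, inner_zero_right]
    simp
  have hv0' : ve ≠ 0 := fun hc => hv0 (by simpa [hve] using congrArg (WithLp.equiv 2 _) hc)
  have hle := hG ve
  rw [pow_eq_zero_iff (two_ne_zero)] at hGv
  rw [hGv] at hle
  have hpos : 0 < ‖ve‖ := norm_pos_iff.2 hv0'
  nlinarith

lemma KG_id (hA : IsUnit (Gᴴ * G).det) (v : Evec n) :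
    matCLM ((Gᴴ * G)⁻¹ * Gᴴ) (matCLM G v) = v := by
  rw [← matCLM_mul, Matrix.mul_assoc, Matrix.nonsing_inv_mul _ hA, matCLM_one]

lemma AK_eq (hA : IsUnit (Gᴴ * G).det) (s : Evec m) :
    matCLM (Gᴴ * G) (matCLM ((Gᴴ * G)⁻¹ * Gᴴ) s) = matCLM Gᴴ s := by
  rw [← matCLM_mul, ← Matrix.mul_assoc, Matrix.mul_nonsing_inv _ hA, Matrix.one_mul]

lemma inner_GK (hA : IsUnit (Gᴴ * G).det) (s : Evec m) :
    ⟪matCLM G (matCLM ((Gᴴ * G)⁻¹ * Gᴴ) s), matCLM G (matCLM ((Gᴴ * G)⁻¹ * Gᴴ) s)⟫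
      = ⟪s, matCLM G (matCLM ((Gᴴ * G)⁻¹ * Gᴴ) s)⟫ := by
  set u := matCLM ((Gᴴ * G)⁻¹ * Gᴴ) s
  calc ⟪matCLM G u, matCLM G u⟫ = ⟪matCLM Gᴴ (matCLM G u), u⟫ :=
        (inner_matCLM_conjT G (matCLM G u) u).symm
    _ = ⟪matCLM Gᴴ s, u⟫ := by
        rw [← matCLM_mul]
        rw [show matCLM (Gᴴ * G) u = matCLM Gᴴ s from AK_eq hA s]
    _ = ⟪s, matCLM G u⟫ := inner_matCLM_conjT G s u

lemma norm_GK_le (hA : IsUnit (Gᴴ * G).det) (s : Evec m) :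
    ‖matCLM G (matCLM ((Gᴴ * G)⁻¹ * Gᴴ) s)‖ ≤ ‖s‖ := by
  set p := matCLM G (matCLM ((Gᴴ * G)⁻¹ * Gᴴ) s) with hp
  have h1 : ‖p‖^2 = (⟪s, p⟫).re := by
    have := @inner_self_eq_norm_sq ℂ _ _ _ _ p
    rw [← this, hp, inner_GK hA]; rfl
  have h2 : (⟪s, p⟫).re ≤ ‖s‖ * ‖p‖ := by
    calc (⟪s, p⟫).re ≤ ‖(⟪s, p⟫ : ℂ)‖ := Complex.re_le_norm _
    _ ≤ ‖s‖ * ‖p‖ := norm_inner_le_norm s p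
  nlinarith [norm_nonneg p, norm_nonneg s]

lemma re_inner_GK_le (hA : IsUnit (Gᴴ * G).det) (s : Evec m) :
    (⟪s, matCLM G (matCLM ((Gᴴ * G)⁻¹ * Gᴴ) s)⟫).re ≤ ‖s‖^2 := by
  set p := matCLM G (matCLM ((Gᴴ * G)⁻¹ * Gᴴ) s) with hp
  have h1 : (⟪s, p⟫).re = ‖p‖^2 := by
    have := @inner_self_eq_norm_sq ℂ _ _ _ _ p
    rw [← this, hp, inner_GK hA]; rfl
  have h2 := norm_GK_le hA s
  nlinarith [norm_nonneg p, norm_nonneg s]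

lemma norm_K_le (hγ : 0 < γ₀) (hG : ∀ v : Evec n, γ₀ * ‖v‖ ≤ ‖matCLM G v‖)
    (hA : IsUnit (Gᴴ * G).det) (s : Evec m) :
    ‖matCLM ((Gᴴ * G)⁻¹ * Gᴴ) s‖ ≤ ‖s‖ / γ₀ := by
  set u := matCLM ((Gᴴ * G)⁻¹ * Gᴴ) s with hu
  have h1 : γ₀ * ‖u‖ ≤ ‖matCLM G u‖ := hG u
  have h2 : ‖matCLM G u‖ ≤ ‖s‖ := norm_GK_le hA s
  rw [le_div_iff₀ hγ]
  nlinarith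

end Poincare

/-- Derivative of the dynamics. -/
lemma wdyn_hasDerivAt {m n : ℕ} (G : Matrix (Fin m) (Fin n) ℂ) (b : Evec n) (t : ℝ) :
    HasDerivAt (fun t : ℝ => wdyn G b t) (matCLM (blockM G) (wdyn G b t)) t := by
  set Mc := matCLM (blockM G) with hMc
  set v := joinV b (0 : Evec m)
  have h1 : ∀ u : ℝ, expM G u = NormedSpace.exp ((u : ℂ) • Mc) := by
    intro u; rw [expM]; norm_cast
  have hz : HasDerivAt (fun z : ℂ => NormedSpace.exp (z • Mc))
      (Mc * NormedSpace.exp ((t:ℂ) • Mc)) (t:ℂ) := hasDerivAt_exp_smul_const' Mc (t:ℂ)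
  have hr : HasDerivAt (fun u : ℝ => expM G u)
      (Mc * NormedSpace.exp ((t:ℂ) • Mc)) t := by
    have hco := hz.scomp t Complex.ofRealCLM.hasDerivAt
    simp only [Complex.ofRealCLM_apply, Complex.ofReal_one, one_smul, Function.comp_def] at hco
    simpa only [← h1] using hco
  have h2 := ((ContinuousLinearMap.apply ℂ (Jvec n m) v).restrictScalars ℝ).hasFDerivAt
    (x := expM G t) |>.comp_hasDerivAt t hr
  simp only [ContinuousLinearMap.coe_restrictScalars', ContinuousLinearMap.apply_apply,
    ContinuousLinearMap.mul_apply, Function.comp_def, ← h1] at h2; exact h2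

/-- `rblock` as a continuous linear map. -/
def rCLM (n m : ℕ) : Jvec n m →L[ℂ] Evec n :=
  LinearMap.toContinuousLinearMap
    { toFun := rblock
      map_add' := fun _ _ => rfl
      map_smul' := fun _ _ => rfl }

/-- `sblock` as a continuous linear map. -/
def sCLM (n m : ℕ) : Jvec n m →L[ℂ] Evec m :=
  LinearMap.toContinuousLinearMap
    { toFun := sblock
      map_add' := fun _ _ => rfl
      map_smul' := fun _ _ => rfl }

/-- Derivative of the Lyapunov functional. -/
lemma Ederiv {n m : ℕ} (Kc : Evec m →L[ℂ] Evec n) (η : ℝ) {r r' : ℝ → Evec n}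
    {s s' : ℝ → Evec m} (hr : ∀ t, HasDerivAt r (r' t) t)
    (hs : ∀ t, HasDerivAt s (s' t) t) (t : ℝ) :
    HasDerivAt (fun u => ‖r u‖^2 + ‖s u‖^2 - 2*η*(⟪r u, Kc (s u)⟫).re)
      ((⟪r t, r' t⟫ + ⟪r' t, r t⟫).re + (⟪s t, s' t⟫ + ⟪s' t, s t⟫).re
        - 2*η*(⟪r t, Kc (s' t)⟫ + ⟪r' t, Kc (s t)⟫).re) t := by
  have h1 := HasDerivAt.inner ℂ (hr t) (hr t)
  have h1r := Complex.reCLM.hasFDerivAt.comp_hasDerivAt t h1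
  simp only [Function.comp_def] at h1r
  have hfun1 : (fun u => Complex.reCLM (⟪r u, r u⟫ : ℂ)) = fun u => ‖r u‖^2 :=
    funext fun u => by simpa using @inner_self_eq_norm_sq ℂ _ _ _ _ (r u)
  rw [hfun1] at h1r
  have h2 := HasDerivAt.inner ℂ (hs t) (hs t)
  have h2r := Complex.reCLM.hasFDerivAt.comp_hasDerivAt t h2
  simp only [Function.comp_def] at h2r
  have hfun2 : (fun u => Complex.reCLM (⟪s u, s u⟫ : ℂ)) = fun u => ‖s u‖^2 :=
    funext fun u => by simpa using @inner_self_eq_norm_sq ℂ _ _ _ _ (s u)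
  rw [hfun2] at h2r
  have hKs : ∀ u : ℝ, HasDerivAt (fun v => Kc (s v)) (Kc (s' u)) u := fun u =>
    ((Kc.restrictScalars ℝ).hasFDerivAt (x := s u)).comp_hasDerivAt u (hs u)
  have h3 := HasDerivAt.inner ℂ (hr t) (hKs t)
  have h3r := Complex.reCLM.hasFDerivAt.comp_hasDerivAt t h3
  simp only [Function.comp_def] at h3r
  have final := (h1r.add h2r).sub (h3r.const_mul (2*η))
  convert final using 1
  all_goals rfl

/-- One-sided exponential decay from a differential inequality. -/
lemma decay_of_deriv_le {E D : ℝ → ℝ} {c : ℝ}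
    (hd : ∀ t, HasDerivAt E (D t) t) (hb : ∀ t, 0 ≤ t → D t ≤ -c * E t)
    (t : ℝ) (ht : 0 ≤ t) : E t ≤ E 0 * Real.exp (-c * t) := by
  set g : ℝ → ℝ := fun u => E u * Real.exp (c * u) with hg
  have hgd : ∀ u, HasDerivAt g ((D u + c * E u) * Real.exp (c * u)) u := by
    intro u
    have he : HasDerivAt (fun u : ℝ => Real.exp (c * u)) (c * Real.exp (c * u)) u := by
      simpa [mul_comm, Function.comp_def] using (Real.hasDerivAt_exp (c * u)).comp u
        ((hasDerivAt_id u).const_mul c)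
    have := (hd u).mul he
    exact this.congr_deriv (by ring)
  have hmono : AntitoneOn g (Set.Ici (0:ℝ)) := by
    apply antitoneOn_of_deriv_nonpos (convex_Ici 0)
    · have hEc : Continuous E := continuous_iff_continuousAt.2 fun x => (hd x).continuousAt
      exact ((hEc.mul ((Real.continuous_exp).comp
        (continuous_const.mul continuous_id))).continuousOn)
    · intro x hx
      exact (hgd x).differentiableAt.differentiableWithinAt
    · intro x hx
      rw [(hgd x).deriv]
      have hx0 : (0:ℝ) ≤ x := le_of_lt (by simpa using hx)
      have := hb x hx0
      have hexp : 0 < Real.exp (c * x) := Real.exp_pos _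
      nlinarith
  have hmt := hmono (Set.self_mem_Ici) (Set.mem_Ici.2 ht) ht
  have hgt : E t * Real.exp (c * t) ≤ E 0 * Real.exp (c * 0) := hmt
  rw [mul_zero, Real.exp_zero, mul_one] at hgt
  have hexp : 0 < Real.exp (c * t) := Real.exp_pos _
  rw [show -c * t = -(c * t) by ring, Real.exp_neg, ← div_eq_mul_inv, le_div_iff₀ hexp]
  exact hgt

lemma aux_ub (η γ₀ q R S x : ℝ) (hη0 : 0 < η) (hγ : 0 < γ₀) (hq : q = η/γ₀)
    (hx : |x| ≤ R * (S/γ₀)) :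
    R^2 + S^2 - 2*η*x ≤ (1+q)*(R^2+S^2) ∧ (1-q)*(R^2+S^2) ≤ R^2 + S^2 - 2*η*x := by
  have habs := abs_le.1 hx
  have key : 2*η*(R * (S/γ₀)) ≤ q * (R^2+S^2) := by
    have heq : 2*η*(R * (S/γ₀)) = (η/γ₀) * (2 * R * S) := by field_simp
    have h2 : 2 * R * S ≤ R^2 + S^2 := by nlinarith [sq_nonneg (R - S)]
    have h3 := mul_le_mul_of_nonneg_left h2 (le_of_lt (div_pos hη0 hγ))
    rw [heq, hq]; linarith
  constructor <;> nlinarith [habs.1, habs.2, hη0]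

lemma aux_step1 (η γ₀ c₀ R S x z : ℝ) (hη0 : 0 < η) (hγ : 0 < γ₀)
    (hc1 : c₀ ≤ η) (hc2 : c₀ ≤ 2*(1-η) - η/γ₀^2)
    (hx : |x| ≤ R*(S/γ₀)) (hz : z ≤ S^2) :
    -2*S^2 - 2*η*R^2 + 2*η*x + 2*η*z ≤ -c₀*(R^2+S^2) := by
  have habs := abs_le.1 hx
  have hAM : 2*(R*(S/γ₀)) ≤ R^2 + (S/γ₀)^2 := by
    have := two_mul_le_add_sq R (S/γ₀); linarith
  have h8 : η * (S/γ₀)^2 = η/γ₀^2 * S^2 := by rw [div_pow]; ring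
  have h7 : η/γ₀^2 * S^2 ≤ (2*(1-η) - c₀) * S^2 := by nlinarith [sq_nonneg S]
  have e1 : 2*η*x ≤ 2*η*(R*(S/γ₀)) := by nlinarith [habs.2, hη0]
  have e2 : 2*η*(R*(S/γ₀)) ≤ η*R^2 + η*(S/γ₀)^2 := by nlinarith [hAM, hη0]
  have e3 : 2*η*z ≤ 2*η*S^2 := by nlinarith [hz, hη0]
  have e4 : c₀*R^2 ≤ η*R^2 := by nlinarith [sq_nonneg R]
  linarith

lemma aux_combine (c c₀ q E N D : ℝ) (hcpos : 0 < c) (hcc : c * (1 + q) = c₀)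
    (hD : D ≤ -c₀ * N) (hE : E ≤ (1+q) * N) : D ≤ -c * E := by
  have h9 : c * E ≤ c * ((1+q) * N) := mul_le_mul_of_nonneg_left hE hcpos.le
  have h10 : c * ((1+q) * N) = c₀ * N := by rw [← hcc]; ring
  linarith

lemma aux_final (q N Et ex b2 : ℝ) (hqpos : 0 < q) (hex : 0 < ex) (hb2 : 0 ≤ b2)
    (hlow : (1-q)*N ≤ Et) (hdec : Et ≤ b2 * ex) : N * (1-q) ≤ (1+q)*ex*b2 := by
  nlinarith [mul_nonneg (mul_nonneg hqpos.le hex.le) hb2]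

set_option maxHeartbeats 2000000 in
theorem stmt19_lyapunov_exponential_decay (γ₀ η : ℝ)
    (hγ : 0 < γ₀) (hη0 : 0 < η) (hη : η < γ₀)
    (hη2 : 0 < 2 * (1 - η) - η / γ₀ ^ 2) :
    ∃ c₀ : ℝ, 0 < c₀ ∧
      ∀ (m n : ℕ), 0 < m → 0 < n →
        ∀ G : Matrix (Fin m) (Fin n) ℂ,
          (∀ v : Evec n, γ₀ * ‖v‖ ≤ ‖matCLM G v‖) →
          ∀ b : Evec n, ∀ t : ℝ, 0 ≤ t →
            (‖rblock (wdyn G b t)‖ ^ 2 + ‖sblock (wdyn G b t)‖ ^ 2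
                - 2 * η * (⟪rblock (wdyn G b t), matCLM ((Gᴴ * G)⁻¹ * Gᴴ) (sblock (wdyn G b t))⟫).re ≤
              (‖rblock (wdyn G b 0)‖ ^ 2 + ‖sblock (wdyn G b 0)‖ ^ 2
                - 2 * η * (⟪rblock (wdyn G b 0), matCLM ((Gᴴ * G)⁻¹ * Gᴴ) (sblock (wdyn G b 0))⟫).re) *
                Real.exp (-(c₀ * t) / (1 + η / γ₀))) ∧
            ‖wdyn G b t‖ ^ 2 ≤
              ((1 + η / γ₀) / (1 - η / γ₀)) * Real.exp (-(c₀ * t) / (1 + η / γ₀)) * ‖b‖ ^ 2 := by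
  refine ⟨min η (2 * (1 - η) - η / γ₀ ^ 2), lt_min hη0 hη2, ?_⟩
  set c₀ := min η (2 * (1 - η) - η / γ₀ ^ 2) with hc₀def
  have hc₀pos : 0 < c₀ := lt_min hη0 hη2
  intro m n hm hn G hG b t ht
  have hA : IsUnit (Gᴴ * G).det := det_unit hγ hG
  set q : ℝ := η / γ₀ with hqdef
  have hqpos : 0 < q := div_pos hη0 hγ
  have hq1 : q < 1 := (div_lt_one hγ).2 hη
  have h1q : (0:ℝ) < 1 + q := by linarith
  set c : ℝ := c₀ / (1 + q) with hcdef
  have hcpos : 0 < c := div_pos hc₀pos h1q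
  have hcc : c * (1 + q) = c₀ := div_mul_cancel₀ _ (ne_of_gt h1q)
  set Kc : Evec m →L[ℂ] Evec n := matCLM ((Gᴴ * G)⁻¹ * Gᴴ) with hKcdef
  set r : ℝ → Evec n := fun u => rblock (wdyn G b u) with hrdef
  set s : ℝ → Evec m := fun u => sblock (wdyn G b u) with hsdef
  set r' : ℝ → Evec n := fun u => -(matCLM Gᴴ (s u)) with hr'def
  set s' : ℝ → Evec m := fun u => matCLM G (r u) - s u with hs'def
  have hr : ∀ u, HasDerivAt r (r' u) u := by
    intro u
    have hw := wdyn_hasDerivAt G b u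
    have h0 := (((rCLM n m).restrictScalars ℝ).hasFDerivAt
      (x := wdyn G b u)).comp_hasDerivAt u hw
    simp only [Function.comp_def, ContinuousLinearMap.coe_restrictScalars'] at h0
    have hfn : (fun v => (rCLM n m) (wdyn G b v)) = r := rfl
    have hvl : (rCLM n m) (matCLM (blockM G) (wdyn G b u)) = r' u := by
      show rblock (matCLM (blockM G) (wdyn G b u)) = _
      rw [rblock_matCLM_blockM]
    rw [hfn, hvl] at h0
    exact h0
  have hs : ∀ u, HasDerivAt s (s' u) u := by
    intro u
    have hw := wdyn_hasDerivAt G b u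
    have h0 := (((sCLM n m).restrictScalars ℝ).hasFDerivAt
      (x := wdyn G b u)).comp_hasDerivAt u hw
    simp only [Function.comp_def, ContinuousLinearMap.coe_restrictScalars'] at h0
    have hfn : (fun v => (sCLM n m) (wdyn G b v)) = s := rfl
    have hvl : (sCLM n m) (matCLM (blockM G) (wdyn G b u)) = s' u := by
      show sblock (matCLM (blockM G) (wdyn G b u)) = _
      rw [sblock_matCLM_blockM]
    rw [hfn, hvl] at h0
    exact h0
  set Ef : ℝ → ℝ := fun u => ‖r u‖^2 + ‖s u‖^2 - 2*η*(⟪r u, Kc (s u)⟫).re with hEfdef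
  set Dt : ℝ → ℝ := fun u => (⟪r u, r' u⟫ + ⟪r' u, r u⟫).re + (⟪s u, s' u⟫ + ⟪s' u, s u⟫).re
    - 2*η*(⟪r u, Kc (s' u)⟫ + ⟪r' u, Kc (s u)⟫).re with hDtdef
  have hEd : ∀ u, HasDerivAt Ef (Dt u) u := fun u => Ederiv Kc η hr hs u
  have hstep2 : ∀ u : ℝ, |(⟪r u, Kc (s u)⟫).re| ≤ ‖r u‖ * (‖s u‖ / γ₀) := by
    intro u
    have h1 : |(⟪r u, Kc (s u)⟫ : ℂ).re| ≤ ‖(⟪r u, Kc (s u)⟫ : ℂ)‖ := by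
      exact Complex.abs_re_le_norm _
    have h2 : ‖(⟪r u, Kc (s u)⟫ : ℂ)‖ ≤ ‖r u‖ * ‖Kc (s u)‖ := norm_inner_le_norm _ _
    have h3 : ‖Kc (s u)‖ ≤ ‖s u‖ / γ₀ := norm_K_le hγ hG hA (s u)
    have h4 : (0:ℝ) ≤ ‖r u‖ := norm_nonneg _
    nlinarith [norm_nonneg (Kc (s u))]
  have hEub : ∀ u : ℝ, Ef u ≤ (1 + q) * (‖r u‖^2 + ‖s u‖^2) :=
    fun u => (aux_ub η γ₀ q (‖r u‖) (‖s u‖) _ hη0 hγ hqdef (hstep2 u)).1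
  have hElb : ∀ u : ℝ, (1 - q) * (‖r u‖^2 + ‖s u‖^2) ≤ Ef u :=
    fun u => (aux_ub η γ₀ q (‖r u‖) (‖s u‖) _ hη0 hγ hqdef (hstep2 u)).2
  have hb' : ∀ u : ℝ, 0 ≤ u → Dt u ≤ -c * Ef u := by
    intro u hu
    have hss : (⟪s u, s u⟫ : ℂ).re = ‖s u‖^2 := by
      have := @inner_self_eq_norm_sq ℂ _ _ _ _ (s u); simpa using this
    have hrr : (⟪r u, r u⟫ : ℂ).re = ‖r u‖^2 := by
      have := @inner_self_eq_norm_sq ℂ _ _ _ _ (r u); simpa using this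
    have ha1 : (⟪r u, r' u⟫ : ℂ) = -⟪matCLM G (r u), s u⟫ := by
      show (⟪r u, -(matCLM Gᴴ (s u))⟫ : ℂ) = _
      rw [inner_neg_right, inner_matCLM_conjT' G (r u) (s u)]
    have ha2 : (⟪r' u, r u⟫ : ℂ) = -⟪s u, matCLM G (r u)⟫ := by
      show (⟪-(matCLM Gᴴ (s u)), r u⟫ : ℂ) = _
      rw [inner_neg_left, inner_matCLM_conjT G (s u) (r u)]
    have ha3 : (⟪s u, s' u⟫ : ℂ) = ⟪s u, matCLM G (r u)⟫ - ⟪s u, s u⟫ := by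
      show (⟪s u, matCLM G (r u) - s u⟫ : ℂ) = _
      rw [inner_sub_right]
    have ha4 : (⟪s' u, s u⟫ : ℂ) = ⟪matCLM G (r u), s u⟫ - ⟪s u, s u⟫ := by
      show (⟪matCLM G (r u) - s u, s u⟫ : ℂ) = _
      rw [inner_sub_left]
    have ha5 : Kc (s' u) = r u - Kc (s u) := by
      show Kc (matCLM G (r u) - s u) = _
      rw [map_sub]
      rw [show Kc (matCLM G (r u)) = r u from KG_id hA (r u)]
    have ha6 : (⟪r u, Kc (s' u)⟫ : ℂ) = ⟪r u, r u⟫ - ⟪r u, Kc (s u)⟫ := by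
      rw [ha5, inner_sub_right]
    have ha7 : (⟪r' u, Kc (s u)⟫ : ℂ) = -⟪s u, matCLM G (Kc (s u))⟫ := by
      show (⟪-(matCLM Gᴴ (s u)), Kc (s u)⟫ : ℂ) = _
      rw [inner_neg_left, inner_matCLM_conjT G (s u) (Kc (s u))]
    have hDt : Dt u = -2*‖s u‖^2 - 2*η*‖r u‖^2 + 2*η*(⟪r u, Kc (s u)⟫).re
        + 2*η*(⟪s u, matCLM G (Kc (s u))⟫).re := by
      show (⟪r u, r' u⟫ + ⟪r' u, r u⟫).re + (⟪s u, s' u⟫ + ⟪s' u, s u⟫).re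
        - 2*η*(⟪r u, Kc (s' u)⟫ + ⟪r' u, Kc (s u)⟫).re = _
      rw [ha1, ha2, ha3, ha4, ha6, ha7]
      simp only [Complex.add_re, Complex.sub_re, Complex.neg_re]
      rw [hss, hrr]
      ring
    have hz : (⟪s u, matCLM G (Kc (s u))⟫).re ≤ ‖s u‖^2 := re_inner_GK_le hA (s u)
    have hstep1 : Dt u ≤ -c₀ * (‖r u‖^2 + ‖s u‖^2) := by
      rw [hDt]
      exact aux_step1 η γ₀ c₀ (‖r u‖) (‖s u‖) _ _ hη0 hγ (min_le_left _ _)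
        (min_le_right _ _) (hstep2 u) hz
    exact aux_combine c c₀ q (Ef u) (‖r u‖^2 + ‖s u‖^2) (Dt u) hcpos hcc hstep1 (hEub u)
  have hdecay := decay_of_deriv_le hEd hb' t ht
  rw [show -c * t = -(c₀ * t) / (1 + q) from by rw [hcdef]; ring] at hdecay
  have hE0 : Ef 0 = ‖b‖^2 := by
    have hw0 : wdyn G b 0 = joinV b (0 : Evec m) := by
      show NormedSpace.exp ((0:ℝ) • matCLM (blockM G)) (joinV b 0) = _
      rw [zero_smul ℝ (matCLM (blockM G)), NormedSpace.exp_zero, ContinuousLinearMap.one_apply]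
    have hr0 : r 0 = b := by show rblock (wdyn G b 0) = b; rw [hw0]; rfl
    have hs0 : s 0 = 0 := by show sblock (wdyn G b 0) = 0; rw [hw0]; rfl
    show ‖r 0‖^2 + ‖s 0‖^2 - 2*η*(⟪r 0, Kc (s 0)⟫).re = ‖b‖^2
    rw [hr0, hs0, map_zero, inner_zero_right]
    norm_num
  constructor
  · exact hdecay
  · have hlow := hElb t
    have hsplit : ‖wdyn G b t‖^2 = ‖r t‖^2 + ‖s t‖^2 := norm_sq_split (wdyn G b t)
    rw [hE0] at hdecay
    have h1mq : (0:ℝ) < 1 - q := by linarith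
    rw [hsplit, show ((1 + q) / (1 - q)) * Real.exp (-(c₀*t)/(1+q)) * ‖b‖^2
      = ((1 + q) * Real.exp (-(c₀*t)/(1+q)) * ‖b‖^2) / (1 - q) from by ring,
      le_div_iff₀ h1mq]
    exact aux_final q (‖r t‖^2 + ‖s t‖^2) (Ef t) (Real.exp (-(c₀*t)/(1+q))) (‖b‖^2)
      hqpos (Real.exp_pos _) (sq_nonneg _) hlow hdecay
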